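/- Let r, s be coprime positive integers with r·t + 1 < s < (t+1)·r for some t ≥ 1 (so s ≠ tr+1). Then there exists j with 1 ≤ j ≤ r - 1 such that ⌈(j+1)·s/r⌉ - ⌈j·s/r⌉ = t + 1. -/
import Mathlib

lemma ceil_helper (r m e : ℕ) (h1 : 0 < e) (h2 : e < r) :
    ⌈(((m * r + e : ℕ) : ℚ)) / r⌉ = (m : ℤ) + 1 := by
  have hr : (0:ℚ) < r := by exact_mod_cast h1.trans h2
  rw [Int.ceil_eq_iff]
  constructor
  · push_cast
    rw [lt_div_iff₀ hr]
    have : (0:ℚ) < e := by exact_mod_cast h1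
    nlinarith
  · push_cast
    rw [div_le_iff₀ hr]
    have : (e:ℚ) ≤ r := by exact_mod_cast h2.le
    nlinarith

lemma val_neg_one' (r : ℕ) (h : 2 ≤ r) : (-1 : ZMod r).val = r - 1 := by
  obtain ⟨m, rfl⟩ : ∃ m, r = m + 1 := ⟨r - 1, by omega⟩
  simp [ZMod.val_neg_one]

theorem exists_ceil_gap (r s t : ℕ) (hr : 0 < r) (hs : 0 < s) (hco : Nat.Coprime r s)
    (ht : 1 ≤ t) (h1 : r * t + 1 < s) (h2 : s < (t + 1) * r) :
    ∃ j : ℕ, 1 ≤ j ∧ j ≤ r - 1 ∧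
      ⌈((j + 1 : ℕ) * s : ℚ) / r⌉ - ⌈(j * s : ℚ) / r⌉ = (t : ℤ) + 1 := by
  have c1 : r * t = t * r := Nat.mul_comm r t
  have c2 : (t + 1) * r = t * r + r := by ring
  set d := s - t * r with hd
  have hsd : s = t * r + d := by omega
  have hd2 : 2 ≤ d := by omega
  have hdr : d < r := by omega
  have hr3 : 3 ≤ r := by omega
  have hsmod : s % r = d := by
    rw [hsd, Nat.add_comm, Nat.add_mul_mod_self_right, Nat.mod_eq_of_lt hdr]
  have hcod : Nat.Coprime d r := by
    have := Nat.gcd_rec r s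
    rw [hsmod] at this
    unfold Nat.Coprime at *
    omega
  haveI : NeZero r := ⟨by omega⟩
  haveI : Fact (1 < r) := ⟨by omega⟩
  have hu : IsUnit (d : ZMod r) := (ZMod.isUnit_iff_coprime d r).mpr hcod
  set j0 : ZMod r := (-1) * (↑d)⁻¹ with hj0
  set j : ℕ := j0.val with hj
  have hjd : ((j * d : ℕ) : ZMod r) = -1 := by
    push_cast
    rw [hj, ZMod.natCast_val, ZMod.cast_id, hj0]
    rw [mul_assoc, ZMod.inv_mul_of_unit _ hu, mul_one]
  have hjdmod : (j * d) % r = r - 1 := by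
    have h := ZMod.val_natCast (n := r) (j * d)
    rw [hjd, val_neg_one' r (by omega)] at h
    omega
  have hj1 : 1 ≤ j := by
    rcases Nat.eq_zero_or_pos j with h | h
    · exfalso
      rw [h] at hjdmod
      simp at hjdmod
      omega
    · exact h
  have hjr : j ≤ r - 1 := by
    have := ZMod.val_lt j0
    omega
  set k := (j * d) / r with hk
  have hjdk : j * d = k * r + (r - 1) := by
    have h := Nat.div_add_mod (j * d) r
    have a3 : r * (j * d / r) = k * r := by rw [hk]; ring
    omega
  refine ⟨j, hj1, hjr, ?_⟩
  have e1 : j * s = (j * t + k) * r + (r - 1) := by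
    have a1 : j * s = j * t * r + j * d := by rw [hsd]; ring
    have a2 : (j * t + k) * r = j * t * r + k * r := by ring
    omega
  have e2 : (j + 1) * s = (j * t + k + t + 1) * r + (d - 1) := by
    have a1 : (j + 1) * s = j * s + s := by ring
    have a2 : (j * t + k + t + 1) * r = (j * t + k) * r + t * r + r := by ring
    omega
  have g1 : ((j + 1 : ℕ) * s : ℚ) = (((j + 1) * s : ℕ) : ℚ) := by push_cast; ring
  have g2 : ((j : ℕ) * s : ℚ) = ((j * s : ℕ) : ℚ) := by push_cast; ring
  rw [g1, g2, e1, e2, ceil_helper r _ _ (by omega) (by omega),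
    ceil_helper r _ _ (by omega) (by omega)]
  push_cast
  ring
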